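/- Let C = {1,2}, σ² > 0, b > 0, a ≥ 0, s ∈ ℝ. Then the pairwise time-lag exponential (LExp) kernel K((t,l),(t',l')) := (σ² / (𝟙{l ≠ l'}·a² + 1)) · exp( −b |t − t' − 𝟙{l ≠ l'}·s| ), where 𝟙{l ≠ l'} equals 1 if l ≠ l' and 0 otherwise, is a positive semidefinite kernel on ℝ × C. -/

import Mathlib

section GplagAux
open MeasureTheory Set
open MeasureTheory Set

lemma min_psd (n : ℕ) (p : Fin n → ℝ) (hp : ∀ i, 0 ≤ p i) (d : Fin n → ℝ) :
    0 ≤ ∑ i, ∑ j, d i * d j * min (p i) (p j) := by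
  set g : Fin n → ℝ → ℝ := fun i x => d i * (Ioo 0 (p i)).indicator 1 x with hg
  have hint : ∀ m : ℝ, Integrable ((Ioo (0:ℝ) m).indicator (1 : ℝ → ℝ)) := fun m =>
    (integrable_indicator_iff measurableSet_Ioo).2
      (integrableOn_const measure_Ioo_lt_top.ne)
  have heq : ∀ i j : Fin n, ∀ x : ℝ,
      g i x * g j x = (d i * d j) * (Ioo 0 (min (p i) (p j))).indicator 1 x := by
    intro i j x
    have h1 : Ioo (0:ℝ) (min (p i) (p j)) = Ioo 0 (p i) ∩ Ioo 0 (p j) := by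
      rw [Set.Ioo_inter_Ioo]; simp
    by_cases hi : x ∈ Ioo 0 (p i) <;> by_cases hj : x ∈ Ioo 0 (p j) <;>
      simp only [Set.mem_Ioo] at hi hj <;>
      simp [hg, h1, Set.indicator_apply, Set.mem_inter_iff, Set.mem_Ioo, hi, hj] <;> tauto
  have hintij : ∀ i j : Fin n, Integrable (fun x => g i x * g j x) := by
    intro i j
    exact (Integrable.congr ((hint _).const_mul (d i * d j))
      (Filter.Eventually.of_forall fun x => (heq i j x).symm))
  have key : ∀ i j : Fin n, ∫ x : ℝ, g i x * g j x = d i * d j * min (p i) (p j) := by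
    intro i j
    rw [MeasureTheory.integral_congr_ae (Filter.Eventually.of_forall (heq i j)),
      integral_const_mul, integral_indicator_one measurableSet_Ioo, Real.volume_real_Ioo_of_le (by simp [hp i, hp j])]
    simp
  calc (0:ℝ) ≤ ∫ x : ℝ, (∑ i, g i x)^2 := integral_nonneg fun x => sq_nonneg _
    _ = ∑ i, ∑ j, d i * d j * min (p i) (p j) := by
        have hx : ∀ x : ℝ, (∑ i, g i x)^2 = ∑ i, ∑ j, g i x * g j x := by
          intro x; rw [sq, Finset.sum_mul_sum]
        rw [MeasureTheory.integral_congr_ae (Filter.Eventually.of_forall hx),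
          MeasureTheory.integral_finset_sum _ (fun i _ => integrable_finset_sum _ (fun j _ => hintij i j))]
        exact Finset.sum_congr rfl fun i _ => by
          rw [MeasureTheory.integral_finset_sum _ (fun j _ => hintij i j)]
          exact Finset.sum_congr rfl fun j _ => key i j

lemma laplace_psd (b : ℝ) (hb : 0 ≤ b) (n : ℕ) (u c : Fin n → ℝ) :
    0 ≤ ∑ i, ∑ j, c i * c j * Real.exp (-b * |u i - u j|) := by
  have h := min_psd n (fun i => Real.exp (2 * b * u i)) (fun i => (Real.exp_pos _).le)
      (fun i => c i * Real.exp (-b * u i))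
  refine le_of_le_of_eq h (Finset.sum_congr rfl fun i _ => Finset.sum_congr rfl fun j _ => ?_)
  rcases le_total (u i) (u j) with h' | h'
  · rw [min_eq_left (Real.exp_le_exp.2 (by nlinarith)), abs_of_nonpos (by linarith)]
    rw [show c i * Real.exp (-b * u i) * (c j * Real.exp (-b * u j)) * Real.exp (2 * b * u i)
        = c i * c j * (Real.exp (-b * u i) * Real.exp (-b * u j) * Real.exp (2 * b * u i)) by ring,
      ← Real.exp_add, ← Real.exp_add]
    congr 2
    ring
  · rw [min_eq_right (Real.exp_le_exp.2 (by nlinarith)), abs_of_nonneg (by linarith)]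
    rw [show c i * Real.exp (-b * u i) * (c j * Real.exp (-b * u j)) * Real.exp (2 * b * u j)
        = c i * c j * (Real.exp (-b * u i) * Real.exp (-b * u j) * Real.exp (2 * b * u j)) by ring,
      ← Real.exp_add, ← Real.exp_add]
    congr 2
    ring

end GplagAux


/-- A kernel `K` on a set `X` is positive semidefinite if for every finite family of
points and real coefficients, `∑ i j, c i * c j * K (x i) (x j) ≥ 0`. -/
def IsPSDKernel {X : Type*} (K : X → X → ℝ) : Prop :=
  ∀ (n : ℕ) (x : Fin n → X) (c : Fin n → ℝ),
    0 ≤ ∑ i, ∑ j, c i * c j * K (x i) (x j)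

/-- The pairwise time-lag exponential (LExp) kernel
`K((t,l),(t',l')) = σ²/(𝟙{l≠l'}a²+1) · exp(-b|t-t'-𝟙{l≠l'}s|)`
is a positive semidefinite kernel on `ℝ × {1,2}`. -/
theorem gplag_LExp_psd (σ2 b a s : ℝ) (hσ2 : 0 < σ2) (hb : 0 < b) (ha : 0 ≤ a) :
    IsPSDKernel (fun p q : ℝ × Fin 2 =>
      σ2 / ((if p.2 ≠ q.2 then (1 : ℝ) else 0) * a ^ 2 + 1) *
        Real.exp (-b * |p.1 - q.1 - (if p.2 ≠ q.2 then (1 : ℝ) else 0) * s|)) := by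
  intro n x c
  have ha1 : (0:ℝ) < a ^ 2 + 1 := by positivity
  set F : Fin n → Fin n → ℝ := fun i j => c i * c j *
    (σ2 / ((if (x i).2 ≠ (x j).2 then (1 : ℝ) else 0) * a ^ 2 + 1) *
      Real.exp (-b * |(x i).1 - (x j).1 - (if (x i).2 ≠ (x j).2 then (1 : ℝ) else 0) * s|))
    with hF
  set u : Fin n → ℝ := fun i => (x i).1 - (if (x i).2 = 1 then s else 0) with hu
  set v : Fin n → ℝ := fun i => (x i).1 + (if (x i).2 = 1 then s else 0) with hv
  set e : Fin 2 → Fin n → ℝ := fun L i => c i * (if (x i).2 = L then 1 else 0) with he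
  have hA : 0 ≤ ∑ i, ∑ j, c i * c j * Real.exp (-b * |u i - u j|) := laplace_psd b hb.le n u c
  have hA' : 0 ≤ ∑ i, ∑ j, c i * c j * Real.exp (-b * |v i - v j|) := laplace_psd b hb.le n v c
  have hB : ∀ L : Fin 2, 0 ≤ ∑ i, ∑ j,
      e L i * e L j * Real.exp (-b * |(x i).1 - (x j).1|) :=
    fun L => laplace_psd b hb.le n (fun i => (x i).1) (e L)
  have h2 : ∀ m : Fin 2, m = 0 ∨ m = 1 := by decide
  have key : ∀ i j : Fin n, F i j + F j i =
      σ2 / (a ^ 2 + 1) * (c i * c j * Real.exp (-b * |u i - u j|))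
      + σ2 / (a ^ 2 + 1) * (c i * c j * Real.exp (-b * |v i - v j|))
      + (2 * σ2 * a ^ 2 / (a ^ 2 + 1)) * (e 0 i * e 0 j * Real.exp (-b * |(x i).1 - (x j).1|))
      + (2 * σ2 * a ^ 2 / (a ^ 2 + 1)) * (e 1 i * e 1 j * Real.exp (-b * |(x i).1 - (x j).1|)) := by
    intro i j
    simp only [hF, hu, hv, he]
    rcases h2 ((x i).2) with hi | hi <;> rcases h2 ((x j).2) with hj | hj <;>
      simp only [hi, hj] <;> norm_num
    · rw [abs_sub_comm ((x j).1) ((x i).1)]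
      field_simp
      ring
    · rw [show (x j).1 - (x i).1 - s = -(((x i).1 - ((x j).1 - s))) by ring, abs_neg,
        show (x i).1 - (x j).1 - s = (x i).1 - ((x j).1 + s) by ring]
      field_simp
      ring
    · rw [show (x j).1 - (x i).1 - s = -(((x i).1 + s - (x j).1)) by ring, abs_neg,
        show (x i).1 - (x j).1 - s = (x i).1 - s - (x j).1 by ring]
      field_simp
    · field_simp
      rw [abs_sub_comm ((x j).1) ((x i).1)]
      ring
  have hdouble : ∑ i, ∑ j, (F i j + F j i) = 2 * ∑ i, ∑ j, F i j := by
    simp only [Finset.sum_add_distrib]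
    rw [Finset.sum_comm]
    ring
  have hsum : ∑ i, ∑ j, (F i j + F j i) =
      σ2 / (a ^ 2 + 1) * (∑ i, ∑ j, c i * c j * Real.exp (-b * |u i - u j|))
      + σ2 / (a ^ 2 + 1) * (∑ i, ∑ j, c i * c j * Real.exp (-b * |v i - v j|))
      + (2 * σ2 * a ^ 2 / (a ^ 2 + 1)) * (∑ i, ∑ j, e 0 i * e 0 j * Real.exp (-b * |(x i).1 - (x j).1|))
      + (2 * σ2 * a ^ 2 / (a ^ 2 + 1)) * (∑ i, ∑ j, e 1 i * e 1 j * Real.exp (-b * |(x i).1 - (x j).1|)) := by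
    rw [Finset.sum_congr rfl (fun i _ => Finset.sum_congr rfl fun j _ => key i j)]
    simp only [Finset.sum_add_distrib, Finset.mul_sum]
  have hc1 : (0:ℝ) ≤ σ2 / (a ^ 2 + 1) := by positivity
  have hc2 : (0:ℝ) ≤ 2 * σ2 * a ^ 2 / (a ^ 2 + 1) := by positivity
  nlinarith [mul_nonneg hc1 hA, mul_nonneg hc1 hA', mul_nonneg hc2 (hB 0), mul_nonneg hc2 (hB 1)]
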